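/- The commutator subgroup D′ of the group D equals the cyclic subgroup ⟨x^(p^l)⟩ generated by x^(p^l), and |D′| = p^(m−l). -/

import Mathlib

open scoped commutatorElement

/-- In the split metacyclic group
`D = ⟨x, y ∣ x^(p^m) = y^(p^n) = 1, y x y⁻¹ = x^(1+p^l)⟩` (`p` odd, `0 < l < m`,
`m − l ≤ n`), the commutator subgroup is `⟨x^(p^l)⟩`, of order `p^(m−l)`. -/
theorem stmt_7 (p m n l : ℕ) (hp : p.Prime) (hodd : Odd p)
    (hl : 0 < l) (hlm : l < m) (hmn : m - l ≤ n)
    (D : Type*) [Group D] (x y : D)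
    (hcard : Nat.card D = p ^ (m + n))
    (hx : orderOf x = p ^ m) (hy : orderOf y = p ^ n)
    (hconj : y * x * y⁻¹ = x ^ (1 + p ^ l))
    (hgen : Subgroup.closure {x, y} = ⊤) :
    commutator D = Subgroup.zpowers (x ^ p ^ l) ∧
    Nat.card (commutator D) = p ^ (m - l) := by
  set a : D := x ^ p ^ l with ha
  set N : Subgroup D := Subgroup.zpowers a with hNdef
  have hppos : 0 < p := hp.pos
  -- order of a
  have horda : orderOf a = p ^ (m - l) := by
    rw [ha, orderOf_pow' x (by positivity), hx,
      Nat.gcd_eq_right (pow_dvd_pow p hlm.le), Nat.pow_div hlm.le hppos]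
  have hord1 : 1 < orderOf a := by
    rw [horda]
    exact Nat.one_lt_pow (by omega) hp.one_lt
  -- conjugation of a by y
  have hconja : y * a * y⁻¹ = a ^ (1 + p ^ l) := by
    rw [ha, ← conj_pow, hconj, ← pow_mul, ← pow_mul, Nat.mul_comm]
  -- coprimality of 1 + p^l with orderOf a
  have hcop : ((1 : ℕ) + p ^ l).Coprime (orderOf a) := by
    rw [horda]
    refine Nat.Coprime.pow_right _ ?_
    rw [Nat.coprime_comm, hp.coprime_iff_not_dvd]
    intro hdvd
    have h1 : p ∣ p ^ l := dvd_pow_self p hl.ne'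
    have h2 : p ∣ 1 := (Nat.dvd_add_right h1).mp (by rwa [Nat.add_comm] at hdvd)
    have := Nat.le_of_dvd Nat.one_pos h2
    have := hp.one_lt
    omega
  -- a^(1+p^l) generates N as well
  have hkey : Subgroup.zpowers (a ^ (1 + p ^ l)) = N := by
    apply le_antisymm
    · exact Subgroup.zpowers_le.mpr (N.pow_mem (Subgroup.mem_zpowers a) _)
    · refine Subgroup.zpowers_le.mpr ?_
      obtain ⟨c, -, hc⟩ := Nat.exists_mul_mod_eq_one_of_coprime hcop hord1
      exact Subgroup.mem_zpowers_iff.mpr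
        ⟨(c : ℤ), by rw [zpow_natCast, ← pow_mul, ← pow_mod_orderOf, hc, pow_one]⟩
  -- x normalizes N
  have hxn : x ∈ Subgroup.normalizer (N : Set D) := by
    rw [Subgroup.mem_normalizer_iff]
    intro h
    constructor
    · intro hh
      obtain ⟨k, rfl⟩ := Subgroup.mem_zpowers_iff.mp hh
      have hc : Commute x (a ^ k) := ((Commute.refl x).pow_right (p ^ l)).zpow_right k
      rw [hc.eq, mul_inv_cancel_right]
      exact N.zpow_mem (Subgroup.mem_zpowers a) k
    · intro hh
      obtain ⟨k, hk⟩ := Subgroup.mem_zpowers_iff.mp hh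
      have hc : Commute x (a ^ k) := ((Commute.refl x).pow_right (p ^ l)).zpow_right k
      have h1 : a ^ k * x = x * h := by rw [hk]; group
      rw [← hc.eq] at h1
      rw [← mul_left_cancel h1]
      exact N.zpow_mem (Subgroup.mem_zpowers a) k
  -- y normalizes N
  have hyn : y ∈ Subgroup.normalizer (N : Set D) := by
    rw [Subgroup.mem_normalizer_iff]
    intro h
    constructor
    · intro hh
      obtain ⟨k, rfl⟩ := Subgroup.mem_zpowers_iff.mp hh
      rw [← conj_zpow, hconja]
      exact N.zpow_mem (N.pow_mem (Subgroup.mem_zpowers a) _) k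
    · intro hh
      rw [← hkey] at hh
      obtain ⟨k, hk⟩ := Subgroup.mem_zpowers_iff.mp hh
      rw [← hconja, conj_zpow] at hk
      have h3 : a ^ k = h := mul_left_cancel (mul_right_cancel hk)
      exact h3 ▸ N.zpow_mem (Subgroup.mem_zpowers a) k
  -- N is normal
  have hnt : Subgroup.normalizer (N : Set D) = ⊤ := by
    rw [eq_top_iff, ← hgen, Subgroup.closure_le]
    intro g hg
    rcases hg with rfl | rfl
    · exact hxn
    · exact hyn
  haveI hNnormal : N.Normal := Subgroup.normalizer_eq_top_iff.mp hnt
  -- quotient is generated by images of x and y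
  have hsurj : Function.Surjective (QuotientGroup.mk' N) := QuotientGroup.mk'_surjective N
  have htopQ : Subgroup.closure ((QuotientGroup.mk' N) '' {x, y}) = ⊤ := by
    rw [← MonoidHom.map_closure, hgen, Subgroup.map_top_of_surjective _ hsurj]
  -- images of x and y commute
  have hcxy : Commute ((QuotientGroup.mk' N) x) ((QuotientGroup.mk' N) y) := by
    have h1 : (QuotientGroup.mk' N) a = 1 :=
      (QuotientGroup.eq_one_iff a).mpr (Subgroup.mem_zpowers a)
    have h0 : (QuotientGroup.mk' N) (y * x * y⁻¹) = (QuotientGroup.mk' N) x := by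
      rw [hconj]
      calc (QuotientGroup.mk' N) (x ^ (1 + p ^ l))
          = (QuotientGroup.mk' N) (x * a) := by rw [ha, pow_add, pow_one]
        _ = (QuotientGroup.mk' N) x * (QuotientGroup.mk' N) a := map_mul _ _ _
        _ = (QuotientGroup.mk' N) x := by rw [h1, mul_one]
    have h2 : (QuotientGroup.mk' N) y * (QuotientGroup.mk' N) x * ((QuotientGroup.mk' N) y)⁻¹
        = (QuotientGroup.mk' N) x := by
      simpa [map_mul, map_inv] using h0
    exact (mul_inv_eq_iff_eq_mul.mp h2).symm
  -- quotient is commutative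
  have hcent : ∀ g : D, g = x ∨ g = y →
      ∀ q : D ⧸ N, Commute ((QuotientGroup.mk' N) g) q := by
    intro g hg q
    have hle : Subgroup.closure ((QuotientGroup.mk' N) '' {x, y})
        ≤ Subgroup.centralizer {(QuotientGroup.mk' N) g} := by
      rw [Subgroup.closure_le]
      rintro q' ⟨g', hg', rfl⟩
      rw [SetLike.mem_coe, Subgroup.mem_centralizer_singleton_iff]
      rcases hg with rfl | rfl <;> rcases hg' with rfl | rfl
      · rfl
      · exact hcxy.symm.eq
      · exact hcxy.eq
      · rfl
    have hq : q ∈ Subgroup.closure ((QuotientGroup.mk' N) '' {x, y}) :=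
      htopQ ▸ Subgroup.mem_top q
    exact (Subgroup.mem_centralizer_singleton_iff.mp (hle hq)).symm
  have hcommQ : ∀ q1 q2 : D ⧸ N, Commute q1 q2 := by
    intro q1 q2
    have hle : Subgroup.closure ((QuotientGroup.mk' N) '' {x, y})
        ≤ Subgroup.centralizer {q1} := by
      rw [Subgroup.closure_le]
      rintro q' ⟨g', hg', rfl⟩
      rw [SetLike.mem_coe, Subgroup.mem_centralizer_singleton_iff]
      exact (hcent g' hg' q1).eq
    have hq : q2 ∈ Subgroup.closure ((QuotientGroup.mk' N) '' {x, y}) :=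
      htopQ ▸ Subgroup.mem_top q2
    exact (Subgroup.mem_centralizer_singleton_iff.mp (hle hq)).symm
  -- commutator D ≤ N
  have hle1 : commutator D ≤ N := by
    rw [commutator_def, Subgroup.commutator_le]
    intro g1 _ g2 _
    rw [← QuotientGroup.eq_one_iff ⁅g1, g2⁆]
    show (QuotientGroup.mk' N) ⁅g1, g2⁆ = 1
    rw [map_commutatorElement]
    exact commutatorElement_eq_one_iff_commute.mpr (hcommQ _ _)
  -- N ≤ commutator D
  have haC : a = ⁅y, x⁆ := by
    rw [commutatorElement_def, hconj, add_comm, pow_add, pow_one, mul_inv_cancel_right, ha]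
  have hle2 : N ≤ commutator D := by
    rw [commutator_def]
    exact Subgroup.zpowers_le.mpr
      (haC ▸ Subgroup.commutator_mem_commutator (Subgroup.mem_top y) (Subgroup.mem_top x))
  have heq : commutator D = N := le_antisymm hle1 hle2
  exact ⟨heq, by rw [heq, hNdef, Nat.card_zpowers, horda]⟩
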